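/- Let φ ∈ C²([0,1]) satisfy φ'' + γ sin φ = 0 with φ(0) = 0, and let θ₀ ∈ C²([0,1]) be the unique solution of θ'' + γ cos(φ) θ = 0 with θ(0) = 0, θ'(0) = 1. Then the pair (μ₀, μ₀°) = (θ₀', θ₀'(1)) satisfies −μ₀(s) + μ₀° + γ ∫_0^1 K(s,ζ) μ₀(ζ) dζ = 0 for all s ∈ [0,1], where K(s,ζ) = ∫_{max(s,ζ)}^1 cos(φ(σ)) dσ; i.e., (θ₀', θ₀'(1)) lies in the kernel of the linearized operator ℒ(ξ, ξ°) = (ξ° − ξ + γ 𝒦ξ, 0). -/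

import Mathlib

open MeasureTheory Set

/-- if `φ` solves the pendulum equation `φ'' + γ sin φ = 0`, `φ(0) = 0`,
and `θ₀` solves the linearized equation `θ'' + γ cos(φ) θ = 0`, `θ(0) = 0`, `θ'(0) = 1`,
then `(θ₀', θ₀'(1))` lies in the kernel of the linearized operator, i.e.
`−θ₀'(s) + θ₀'(1) + γ ∫_0^1 K(s,ζ) θ₀'(ζ) dζ = 0` with
`K(s,ζ) = ∫_{max(s,ζ)}^1 cos(φ(σ)) dσ`. -/
theorem stmt_4 (γ : ℝ) (hγ : 0 < γ)
    (φ χ : ℝ → ℝ) (hφ0 : φ 0 = 0)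
    (hφd : ∀ s ∈ Icc (0:ℝ) 1, HasDerivWithinAt φ (χ s) (Icc 0 1) s)
    (hχd : ∀ s ∈ Icc (0:ℝ) 1, HasDerivWithinAt χ (-(γ * Real.sin (φ s))) (Icc 0 1) s)
    (θ₀ dθ : ℝ → ℝ) (hθ0 : θ₀ 0 = 0) (hdθ0 : dθ 0 = 1)
    (hθd : ∀ s ∈ Icc (0:ℝ) 1, HasDerivWithinAt θ₀ (dθ s) (Icc 0 1) s)
    (hdθd : ∀ s ∈ Icc (0:ℝ) 1,
      HasDerivWithinAt dθ (-(γ * Real.cos (φ s) * θ₀ s)) (Icc 0 1) s)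
    (K : ℝ → ℝ → ℝ)
    (hK : ∀ s ζ, K s ζ = ∫ σ in max s ζ..1, Real.cos (φ σ)) :
    ∀ s ∈ Icc (0:ℝ) 1,
      -dθ s + dθ 1 + γ * ∫ ζ in (0:ℝ)..1, K s ζ * dθ ζ = 0 := by
  intro s hs
  obtain ⟨hs0, hs1⟩ := hs
  set c : ℝ → ℝ := fun σ => Real.cos (φ σ) with hc
  -- continuity facts
  have hφc : ContinuousOn φ (Icc 0 1) := fun x hx => (hφd x hx).continuousWithinAt
  have hcc : ContinuousOn c (Icc 0 1) := Real.continuous_cos.comp_continuousOn hφc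
  have hθc : ContinuousOn θ₀ (Icc 0 1) := fun x hx => (hθd x hx).continuousWithinAt
  have hdθc : ContinuousOn dθ (Icc 0 1) := fun x hx => (hdθd x hx).continuousWithinAt
  have hnhds : ∀ x ∈ Ioo (0:ℝ) 1, Icc (0:ℝ) 1 ∈ nhds x := fun x hx =>
    Icc_mem_nhds hx.1 hx.2
  have hθda : ∀ x ∈ Ioo (0:ℝ) 1, HasDerivAt θ₀ (dθ x) x := fun x hx =>
    (hθd x (Ioo_subset_Icc_self hx)).hasDerivAt (hnhds x hx)
  have hdθda : ∀ x ∈ Ioo (0:ℝ) 1, HasDerivAt dθ (-(γ * c x * θ₀ x)) x := fun x hx =>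
    (hdθd x (Ioo_subset_Icc_self hx)).hasDerivAt (hnhds x hx)
  have hcca : ∀ x ∈ Ioo (0:ℝ) 1, ContinuousAt c x := fun x hx =>
    Real.continuous_cos.continuousAt.comp
      (((hφd x (Ioo_subset_Icc_self hx)).hasDerivAt (hnhds x hx)).continuousAt)
  have hccIoo : ContinuousOn c (Ioo 0 1) := fun x hx => (hcca x hx).continuousWithinAt
  -- c is interval integrable on subintervals of [0,1]
  have hcint : ∀ a b : ℝ, a ∈ Icc (0:ℝ) 1 → b ∈ Icc (0:ℝ) 1 →
      IntervalIntegrable c volume a b := fun a b ha hb =>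
    (hcc.mono (uIcc_subset_Icc ha hb)).intervalIntegrable
  -- the primitive F
  set F : ℝ → ℝ := fun t => ∫ σ in t..1, c σ with hF
  have hFc : ContinuousOn F (Icc 0 1) := by
    have := intervalIntegral.continuousOn_primitive_interval_left (a := (0:ℝ)) (b := (1:ℝ))
      (f := c) (μ := volume) (by
        rw [uIcc_of_le (by norm_num : (0:ℝ) ≤ 1)]
        exact (hcc.mono Subset.rfl).integrableOn_compact isCompact_Icc)
    rwa [uIcc_of_le (by norm_num : (0:ℝ) ≤ 1)] at this
  have hFd : ∀ x ∈ Ioo (0:ℝ) 1, HasDerivAt F (-(c x)) x := by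
    intro x hx
    have h1 : HasDerivAt (fun u => ∫ σ in (1:ℝ)..u, c σ) (c x) x :=
      intervalIntegral.integral_hasDerivAt_right
        (hcint 1 x ⟨zero_le_one, le_rfl⟩ (Ioo_subset_Icc_self hx))
        (ContinuousOn.stronglyMeasurableAtFilter (μ := volume) isOpen_Ioo hccIoo x hx)
        (hcca x hx)
    have heq : F = fun u => -∫ σ in (1:ℝ)..u, c σ :=
      funext fun u => intervalIntegral.integral_symm 1 u
    rw [heq]
    exact h1.neg
  have hF1 : F 1 = 0 := by simp [hF]
  -- Step A : dθ 1 - dθ s = ∫_s^1 -(γ c θ₀)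
  have hIccsub : Icc s 1 ⊆ Icc (0:ℝ) 1 := Icc_subset_Icc hs0 le_rfl
  have hcθint : IntervalIntegrable (fun ζ => c ζ * θ₀ ζ) volume s 1 :=
    ((hcc.mul hθc).mono (uIcc_subset_Icc ⟨hs0, hs1⟩ (by norm_num))).intervalIntegrable
  have stepA : ∫ ζ in s..1, -(γ * c ζ * θ₀ ζ) = dθ 1 - dθ s := by
    apply intervalIntegral.integral_eq_sub_of_hasDeriv_right_of_le hs1
      (hdθc.mono hIccsub)
    · intro x hx
      exact (hdθda x ⟨lt_of_le_of_lt hs0 hx.1, hx.2⟩).hasDerivWithinAt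
    · have : (fun ζ => -(γ * c ζ * θ₀ ζ)) = fun ζ => -γ * (c ζ * θ₀ ζ) := by
        ext ζ; ring
      rw [this]
      exact (hcθint.const_mul _)
  -- Step B1 : ∫_0^s K s ζ * dθ ζ = F s * θ₀ s
  have stepB1 : ∫ ζ in (0:ℝ)..s, K s ζ * dθ ζ = F s * θ₀ s := by
    have hcongr : ∀ ζ ∈ uIcc (0:ℝ) s, K s ζ * dθ ζ = F s * dθ ζ := by
      intro ζ hζ
      rw [uIcc_of_le hs0] at hζ
      rw [hK, max_eq_left hζ.2]
    rw [intervalIntegral.integral_congr hcongr, intervalIntegral.integral_const_mul]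
    have : ∫ ζ in (0:ℝ)..s, dθ ζ = θ₀ s - θ₀ 0 := by
      apply intervalIntegral.integral_eq_sub_of_hasDeriv_right_of_le hs0
        (hθc.mono (Icc_subset_Icc le_rfl hs1))
      · intro x hx
        exact (hθda x ⟨hx.1, lt_of_lt_of_le hx.2 hs1⟩).hasDerivWithinAt
      · exact (hdθc.mono (uIcc_subset_Icc (by norm_num) ⟨hs0, hs1⟩)).intervalIntegrable
    rw [this, hθ0, sub_zero]
  -- Step B2 : ∫_s^1 K s ζ * dθ ζ = -(F s * θ₀ s) + ∫_s^1 c ζ * θ₀ ζ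
  have hFdθint : IntervalIntegrable (fun ζ => F ζ * dθ ζ) volume s 1 :=
    ((hFc.mul hdθc).mono (uIcc_subset_Icc ⟨hs0, hs1⟩ (by norm_num))).intervalIntegrable
  have hncθint : IntervalIntegrable (fun ζ => -(c ζ) * θ₀ ζ) volume s 1 := by
    have := hcθint.neg; simpa [neg_mul, Pi.neg_def] using this
  have stepB2 : ∫ ζ in s..1, K s ζ * dθ ζ = -(F s * θ₀ s) + ∫ ζ in s..1, c ζ * θ₀ ζ := by
    have hcongr : ∀ ζ ∈ uIcc s 1, K s ζ * dθ ζ = F ζ * dθ ζ := by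
      intro ζ hζ
      rw [uIcc_of_le hs1] at hζ
      rw [hK, max_eq_right hζ.1]
    rw [intervalIntegral.integral_congr hcongr]
    have hH : ∫ ζ in s..1, (-(c ζ) * θ₀ ζ + F ζ * dθ ζ) = F 1 * θ₀ 1 - F s * θ₀ s := by
      apply intervalIntegral.integral_eq_sub_of_hasDeriv_right_of_le hs1
        ((hFc.mul hθc).mono hIccsub)
      · intro x hx
        have hx' : x ∈ Ioo (0:ℝ) 1 := ⟨lt_of_le_of_lt hs0 hx.1, hx.2⟩
        exact ((hFd x hx').mul (hθda x hx')).hasDerivWithinAt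
      · exact hncθint.add hFdθint
    rw [hF1, zero_mul, zero_sub] at hH
    have hsplit : ∫ ζ in s..1, (-(c ζ) * θ₀ ζ + F ζ * dθ ζ)
        = (∫ ζ in s..1, -(c ζ) * θ₀ ζ) + ∫ ζ in s..1, F ζ * dθ ζ := by
      exact intervalIntegral.integral_add hncθint hFdθint
    have hneg : ∫ ζ in s..1, -(c ζ) * θ₀ ζ = -∫ ζ in s..1, c ζ * θ₀ ζ := by
      rw [← intervalIntegral.integral_neg]
      congr 1; ext ζ; ring
    rw [hsplit, hneg] at hH
    linarith
  -- combine
  have hsplit01 : ∫ ζ in (0:ℝ)..1, K s ζ * dθ ζ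
      = (∫ ζ in (0:ℝ)..s, K s ζ * dθ ζ) + ∫ ζ in s..1, K s ζ * dθ ζ := by
    rw [intervalIntegral.integral_add_adjacent_intervals]
    · apply ContinuousOn.intervalIntegrable
      apply ContinuousOn.congr
        ((continuousOn_const (c := F s)).mul
          (hdθc.mono (uIcc_subset_Icc ⟨le_rfl, zero_le_one⟩ ⟨hs0, hs1⟩)))
      intro ζ hζ
      rw [uIcc_of_le hs0] at hζ
      show K s ζ * dθ ζ = F s * dθ ζ
      rw [hK, max_eq_left hζ.2]
    · apply ContinuousOn.intervalIntegrable
      apply ContinuousOn.congr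
        ((hFc.mul hdθc).mono (uIcc_subset_Icc ⟨hs0, hs1⟩ ⟨zero_le_one, le_rfl⟩))
      intro ζ hζ
      rw [uIcc_of_le hs1] at hζ
      show K s ζ * dθ ζ = F ζ * dθ ζ
      rw [hK, max_eq_right hζ.1]
  have hA : dθ 1 - dθ s = -γ * ∫ ζ in s..1, c ζ * θ₀ ζ := by
    rw [← stepA, ← intervalIntegral.integral_const_mul]
    congr 1; ext ζ; ring
  rw [hsplit01, stepB1, stepB2]
  linarith [hA]
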